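/- For each natural number n, let H_n(x) = (-1)^n e^{x²} · (d/dx)^n(e^{-x²}) be the n-th physicists' Hermite polynomial (Rodrigues formula), and let ψ_n(x) = (√π · 2^n · n!)^{-1/2} e^{-x²/2} H_n(x) be the n-th Hermite function. Then the Segal–Bargmann transform maps ψ_n to the normalized monomial: π^{-1/4} ∫_ℝ exp(-z²/2 - x²/2 + √2·x·z) ψ_n(x) dx = z^n/√(n!) for all z ∈ ℂ. -/

import Mathlib

open MeasureTheory Real Filter

noncomputable section



lemma herm_poly (n : ℕ) : ∃ p : Polynomial ℝ,
    ∀ x : ℝ, iteratedDeriv n (fun y : ℝ => Real.exp (-y ^ 2)) x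
      = p.eval x * Real.exp (-x ^ 2) := by
  induction n with
  | zero => exact ⟨1, fun x => by simp⟩
  | succ n ih =>
    obtain ⟨p, hp⟩ := ih
    refine ⟨p.derivative - Polynomial.C 2 * Polynomial.X * p, fun x => ?_⟩
    rw [iteratedDeriv_succ, funext hp]
    have hx : HasDerivAt (fun x : ℝ => -x ^ 2) (-(2 * x)) x := by
      simpa [Pi.neg_def] using (hasDerivAt_pow 2 x).neg
    have h1 : HasDerivAt (fun x : ℝ => p.eval x * Real.exp (-x ^ 2))
        (Polynomial.eval x (Polynomial.derivative p) * Real.exp (-x ^ 2)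
          + p.eval x * (Real.exp (-x ^ 2) * (-(2 * x)))) x :=
      (p.hasDerivAt x).mul hx.exp
    rw [h1.deriv]
    simp only [Polynomial.eval_sub, Polynomial.eval_mul, Polynomial.eval_C, Polynomial.eval_X]
    ring

lemma herm_hasDerivAt (n : ℕ) (x : ℝ) :
    HasDerivAt (iteratedDeriv n (fun y : ℝ => Real.exp (-y ^ 2)))
      (iteratedDeriv (n + 1) (fun y : ℝ => Real.exp (-y ^ 2)) x) x := by
  obtain ⟨p, hp⟩ := herm_poly n
  have hx : HasDerivAt (fun x : ℝ => -x ^ 2) (-(2 * x)) x := by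
    simpa [Pi.neg_def] using (hasDerivAt_pow 2 x).neg
  have h1 : HasDerivAt (fun x : ℝ => p.eval x * Real.exp (-x ^ 2))
      (Polynomial.eval x (Polynomial.derivative p) * Real.exp (-x ^ 2)
        + p.eval x * (Real.exp (-x ^ 2) * (-(2 * x)))) x :=
    (p.hasDerivAt x).mul hx.exp
  rw [iteratedDeriv_succ, funext hp, h1.deriv]
  
  exact h1



lemma integrable_pow_mul_gauss (k : ℕ) {b : ℝ} (hb : 0 < b) :
    Integrable fun x : ℝ => x ^ k * Real.exp (-b * x ^ 2) := by
  have : (-1 : ℝ) < (k : ℝ) := neg_one_lt_zero.trans_le (Nat.cast_nonneg k)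
  simpa [Real.rpow_natCast] using integrable_rpow_mul_exp_neg_mul_sq hb this

lemma integrable_monomial_cexp (k : ℕ) (c : ℂ) :
    Integrable fun x : ℝ => (x : ℂ) ^ k * Complex.exp (-(x : ℂ) ^ 2 + c * x) := by
  have h34 : (0 : ℝ) < 3 / 4 := by norm_num
  have hg : Integrable fun x : ℝ =>
      Real.exp (c.re ^ 2) * ((1 + x ^ (2 * k)) * Real.exp (-(3 / 4 : ℝ) * x ^ 2)) := by
    have := ((integrable_exp_neg_mul_sq h34).add
      (integrable_pow_mul_gauss (2 * k) h34)).const_mul (Real.exp (c.re ^ 2))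
    exact this.congr (Eventually.of_forall fun x => by simp only [Pi.add_apply]; ring)
  apply Integrable.mono' hg
  · apply Continuous.aestronglyMeasurable
    fun_prop
  · filter_upwards with x
    have hre : (-(x : ℂ) ^ 2 + c * x).re = -x ^ 2 + c.re * x := by
      simp [Complex.add_re, Complex.mul_re, ← Complex.ofReal_pow]
    have hnorm : ‖(x : ℂ) ^ k * Complex.exp (-(x : ℂ) ^ 2 + c * x)‖
        = |x| ^ k * Real.exp (-x ^ 2 + c.re * x) := by
      rw [norm_mul, norm_pow, Complex.norm_real, Complex.norm_exp, hre]
      simp [Real.norm_eq_abs]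
    rw [hnorm]
    have hx2 : (0 : ℝ) ≤ x ^ (2 * k) := by rw [pow_mul]; positivity
    have h1 : |x| ^ k ≤ 1 + x ^ (2 * k) := by
      rcases le_total |x| 1 with h | h
      · have := pow_le_one₀ (n := k) (abs_nonneg x) h
        linarith
      · have h2 : |x| ^ k ≤ |x| ^ (2 * k) := pow_le_pow_right₀ h (by omega)
        have h3 : |x| ^ (2 * k) = x ^ (2 * k) := by
          rw [← _root_.abs_pow, _root_.abs_of_nonneg hx2]
        linarith [h2.trans_eq h3]
    have h2 : Real.exp (-x ^ 2 + c.re * x)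
        ≤ Real.exp (c.re ^ 2) * Real.exp (-(3 / 4 : ℝ) * x ^ 2) := by
      rw [← Real.exp_add]
      apply Real.exp_le_exp.2
      nlinarith [sq_nonneg (c.re - x / 2)]
    calc |x| ^ k * Real.exp (-x ^ 2 + c.re * x)
        ≤ (1 + x ^ (2 * k)) * (Real.exp (c.re ^ 2) * Real.exp (-(3 / 4 : ℝ) * x ^ 2)) := by
          apply mul_le_mul h1 h2 (Real.exp_pos _).le
          linarith
      _ = Real.exp (c.re ^ 2) * ((1 + x ^ (2 * k)) * Real.exp (-(3 / 4 : ℝ) * x ^ 2)) := by ring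

lemma integrable_poly_cexp (p : Polynomial ℝ) (c : ℂ) :
    Integrable fun x : ℝ => ((p.eval x : ℝ) : ℂ) * Complex.exp (-(x : ℂ) ^ 2 + c * x) := by
  induction p using Polynomial.induction_on' with
  | add p q hp hq => simpa [add_mul, Pi.add_def] using hp.add hq
  | monomial k a =>
    simpa [Polynomial.eval_monomial, Complex.ofReal_mul, Complex.ofReal_pow, mul_assoc]
      using (integrable_monomial_cexp k c).const_mul (a : ℂ)

lemma integrable_herm (m : ℕ) (z : ℂ) :
    Integrable fun x : ℝ => Complex.exp ((Real.sqrt 2 : ℂ) * x * z)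
      * ((iteratedDeriv m (fun y : ℝ => Real.exp (-y ^ 2)) x : ℝ) : ℂ) := by
  obtain ⟨p, hp⟩ := herm_poly m
  refine (integrable_poly_cexp p ((Real.sqrt 2 : ℂ) * z)).congr
    (Eventually.of_forall fun x => ?_)
  simp only [hp x]
  push_cast
  have e : Complex.exp (-(x : ℂ) ^ 2 + (Real.sqrt 2 : ℂ) * z * x)
      = Complex.exp ((Real.sqrt 2 : ℂ) * x * z) * Complex.exp (-(x : ℂ) ^ 2) := by
    rw [← Complex.exp_add]; ring_nf
  rw [e]; ring


lemma herm_integral (n : ℕ) (z : ℂ) :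
    ∫ x : ℝ, Complex.exp ((Real.sqrt 2 : ℂ) * x * z)
        * ((iteratedDeriv n (fun y : ℝ => Real.exp (-y ^ 2)) x : ℝ) : ℂ)
      = (-((Real.sqrt 2 : ℂ) * z)) ^ n
          * (((π : ℂ)) ^ (1 / 2 : ℂ) * Complex.exp (z ^ 2 / 2)) := by
  have hsq : ((Real.sqrt 2 : ℝ) : ℂ) ^ 2 = 2 := by
    rw [← Complex.ofReal_pow, Real.sq_sqrt (by norm_num : (0:ℝ) ≤ 2)]
    norm_num
  induction n with
  | zero =>
    simp only [iteratedDeriv_zero, pow_zero, one_mul]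
    have h : ∀ x : ℝ, Complex.exp ((Real.sqrt 2 : ℂ) * x * z) * ((Real.exp (-x ^ 2) : ℝ) : ℂ)
        = Complex.exp ((-1 : ℂ) * (x:ℂ) ^ 2 + ((Real.sqrt 2 : ℂ) * z) * x + 0) := by
      intro x
      push_cast
      rw [← Complex.exp_add]
      ring_nf
    simp only [h]
    rw [integral_cexp_quadratic (by norm_num : (-1 : ℂ).re < 0)]
    congr 1
    · norm_num
    · congr 1
      rw [mul_pow, hsq]
      ring
  | succ n ih =>
    have hu : ∀ x : ℝ, HasDerivAt (fun x : ℝ => Complex.exp ((Real.sqrt 2 : ℂ) * x * z))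
        (Complex.exp ((Real.sqrt 2 : ℂ) * x * z) * ((Real.sqrt 2 : ℂ) * z)) x := by
      intro x
      have h0 : HasDerivAt (fun x : ℝ => (Real.sqrt 2 : ℂ) * x * z)
          ((Real.sqrt 2 : ℂ) * z) x := by
        simpa using (((hasDerivAt_id x).ofReal_comp).const_mul
          ((Real.sqrt 2 : ℂ))).mul_const z
      exact h0.cexp
    have hv : ∀ x : ℝ, HasDerivAt
        (fun x : ℝ => ((iteratedDeriv n (fun y : ℝ => Real.exp (-y ^ 2)) x : ℝ) : ℂ))
        (((iteratedDeriv (n + 1) (fun y : ℝ => Real.exp (-y ^ 2)) x : ℝ)) : ℂ) x :=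
      fun x => (herm_hasDerivAt n x).ofReal_comp
    have h1 : Integrable ((fun x : ℝ => Complex.exp ((Real.sqrt 2 : ℂ) * x * z)) *
        (fun x : ℝ => ((iteratedDeriv (n + 1) (fun y : ℝ => Real.exp (-y ^ 2)) x : ℝ) : ℂ))) :=
      integrable_herm (n + 1) z
    have h3 : Integrable ((fun x : ℝ => Complex.exp ((Real.sqrt 2 : ℂ) * x * z)) *
        (fun x : ℝ => ((iteratedDeriv n (fun y : ℝ => Real.exp (-y ^ 2)) x : ℝ) : ℂ))) :=
      integrable_herm n z
    have h2 : Integrable ((fun x : ℝ => Complex.exp ((Real.sqrt 2 : ℂ) * x * z)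
          * ((Real.sqrt 2 : ℂ) * z)) *
        (fun x : ℝ => ((iteratedDeriv n (fun y : ℝ => Real.exp (-y ^ 2)) x : ℝ) : ℂ))) := by
      refine ((integrable_herm n z).const_mul ((Real.sqrt 2 : ℂ) * z)).congr
        (Eventually.of_forall fun x => ?_)
      simp only [Pi.mul_apply]
      ring
    have key := integral_mul_deriv_eq_deriv_mul_of_integrable (fun x _ => hu x) (fun x _ => hv x) h1 h2 h3
    rw [key]
    have h4 : ∀ x : ℝ, (Complex.exp ((Real.sqrt 2 : ℂ) * x * z) * ((Real.sqrt 2 : ℂ) * z))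
        * ((iteratedDeriv n (fun y : ℝ => Real.exp (-y ^ 2)) x : ℝ) : ℂ)
        = ((Real.sqrt 2 : ℂ) * z) * (Complex.exp ((Real.sqrt 2 : ℂ) * x * z)
          * ((iteratedDeriv n (fun y : ℝ => Real.exp (-y ^ 2)) x : ℝ) : ℂ)) := by
      intro x; ring
    simp only [h4]
    rw [integral_const_mul, ih]
    ring


lemma real_const_eq (n : ℕ) :
    π ^ (-(1 / 4 : ℝ)) * ((Real.sqrt π * 2 ^ n * n.factorial) ^ (-(1 / 2 : ℝ))
      * Real.sqrt 2 ^ n * Real.sqrt π) = (Real.sqrt n.factorial)⁻¹ := by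
  have hfac : (0 : ℝ) < n.factorial := by exact_mod_cast n.factorial_pos
  rw [Real.sqrt_eq_rpow, Real.sqrt_eq_rpow, Real.sqrt_eq_rpow]
  rw [Real.mul_rpow (by positivity) hfac.le, Real.mul_rpow (by positivity) (by positivity)]
  rw [← Real.rpow_natCast (2 ^ (1 / 2 : ℝ)) n, ← Real.rpow_natCast 2 n]
  rw [← Real.rpow_mul pi_pos.le, ← Real.rpow_mul (by norm_num : (0:ℝ) ≤ 2),
    ← Real.rpow_mul (by norm_num : (0:ℝ) ≤ 2), ← Real.rpow_neg hfac.le]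
  rw [show π ^ (-(1 / 4 : ℝ)) * (π ^ ((1 / 2 : ℝ) * -(1 / 2 : ℝ)) * 2 ^ ((n : ℝ) * -(1 / 2 : ℝ))
        * (n.factorial : ℝ) ^ (-(1 / 2 : ℝ)) * 2 ^ ((1 / 2 : ℝ) * (n : ℝ)) * π ^ (1 / 2 : ℝ))
      = ((π ^ (-(1 / 4 : ℝ)) * π ^ ((1 / 2 : ℝ) * -(1 / 2 : ℝ))) * π ^ (1 / 2 : ℝ))
        * (2 ^ ((n : ℝ) * -(1 / 2 : ℝ)) * 2 ^ ((1 / 2 : ℝ) * (n : ℝ)))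
        * (n.factorial : ℝ) ^ (-(1 / 2 : ℝ)) from by ring]
  rw [← Real.rpow_add pi_pos, ← Real.rpow_add pi_pos, ← Real.rpow_add two_pos]
  norm_num
  rw [show -((n : ℝ) * (1 / 2)) + 1 / 2 * (n : ℝ) = 0 from by ring, Real.rpow_zero, one_mul]


/-- The Segal–Bargmann transform maps the `n`-th Hermite function
`ψ_n(x) = (√π·2^n·n!)^{-1/2} e^{-x²/2} H_n(x)`, where
`H_n(x) = (-1)^n e^{x²} (d/dx)^n (e^{-x²})` is the physicists' Hermite polynomial, to
the normalized monomial `z^n/√(n!)`: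
`π^{-1/4} ∫_ℝ exp(-z²/2 - x²/2 + √2·x·z) ψ_n(x) dx = z^n/√(n!)` for all `z ∈ ℂ`. -/
theorem segal_bargmann_transform_hermite (n : ℕ) :
    ∀ z : ℂ,
      ((π ^ (-(1 / 4 : ℝ)) : ℝ) : ℂ) *
        (∫ x : ℝ, Complex.exp (-z ^ 2 / 2 - (x : ℂ) ^ 2 / 2 +
            (Real.sqrt 2 : ℂ) * (x : ℂ) * z) *
          ((((Real.sqrt π * 2 ^ n * n.factorial) ^ (-(1 / 2 : ℝ)) *
              Real.exp (-x ^ 2 / 2) *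
              ((-1 : ℝ) ^ n * Real.exp (x ^ 2) *
                iteratedDeriv n (fun y : ℝ => Real.exp (-y ^ 2)) x)) : ℝ) : ℂ)) =
      z ^ n / ((Real.sqrt n.factorial : ℝ) : ℂ) := by
  intro z
  set C : ℝ := (Real.sqrt π * 2 ^ n * n.factorial) ^ (-(1 / 2 : ℝ)) with hC
  have hpt : ∀ x : ℝ, Complex.exp (-z ^ 2 / 2 - (x : ℂ) ^ 2 / 2 +
            (Real.sqrt 2 : ℂ) * (x : ℂ) * z) *
          (((C * Real.exp (-x ^ 2 / 2) *
              ((-1 : ℝ) ^ n * Real.exp (x ^ 2) *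
                iteratedDeriv n (fun y : ℝ => Real.exp (-y ^ 2)) x)) : ℝ) : ℂ)
      = ((C : ℂ) * (-1 : ℂ) ^ n * Complex.exp (-z ^ 2 / 2)) *
          (Complex.exp ((Real.sqrt 2 : ℂ) * x * z)
            * ((iteratedDeriv n (fun y : ℝ => Real.exp (-y ^ 2)) x : ℝ) : ℂ)) := by
    intro x
    have e : Complex.exp (-z ^ 2 / 2 - (x : ℂ) ^ 2 / 2 + (Real.sqrt 2 : ℂ) * x * z)
          * Complex.exp (-(x : ℂ) ^ 2 / 2) * Complex.exp ((x : ℂ) ^ 2)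
        = Complex.exp (-z ^ 2 / 2) * Complex.exp ((Real.sqrt 2 : ℂ) * x * z) := by
      rw [← Complex.exp_add, ← Complex.exp_add, ← Complex.exp_add]
      ring_nf
    push_cast
    linear_combination ((C : ℂ) * (-1 : ℂ) ^ n *
      ((iteratedDeriv n (fun y : ℝ => Real.exp (-y ^ 2)) x : ℝ) : ℂ)) * e
  simp only [hpt]
  rw [integral_const_mul, herm_integral n z]
  have hπ : ((π : ℂ)) ^ (1 / 2 : ℂ) = ((Real.sqrt π : ℝ) : ℂ) := by
    rw [Real.sqrt_eq_rpow, Complex.ofReal_cpow pi_pos.le]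
    norm_num
  rw [hπ]
  have hneg : (-1 : ℂ) ^ n * (-((Real.sqrt 2 : ℂ) * z)) ^ n
      = ((Real.sqrt 2 : ℝ) : ℂ) ^ n * z ^ n := by
    rw [← mul_pow, ← mul_pow]
    ring_nf
  have hexp : Complex.exp (-z ^ 2 / 2) * Complex.exp (z ^ 2 / 2) = 1 := by
    rw [← Complex.exp_add, show -z ^ 2 / 2 + z ^ 2 / 2 = 0 from by ring, Complex.exp_zero]
  have hconst : ((π ^ (-(1 / 4 : ℝ)) : ℝ) : ℂ) * ((C : ℂ) * ((Real.sqrt 2 : ℝ) : ℂ) ^ n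
      * ((Real.sqrt π : ℝ) : ℂ)) = (((Real.sqrt n.factorial : ℝ) : ℂ))⁻¹ := by
    norm_cast
    rw [hC]
    exact_mod_cast real_const_eq n
  linear_combination z ^ n * hconst + (((π ^ (-(1 / 4 : ℝ)) : ℝ) : ℂ) * (C : ℂ) * ((Real.sqrt π : ℝ) : ℂ)
      * Complex.exp (-z ^ 2 / 2) * Complex.exp (z ^ 2 / 2)) * hneg
    + (((π ^ (-(1 / 4 : ℝ)) : ℝ) : ℂ) * (C : ℂ) * ((Real.sqrt π : ℝ) : ℂ)
      * ((Real.sqrt 2 : ℝ) : ℂ) ^ n * z ^ n) * hexp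

end
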